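/- Let A₁ := −(μ−r)²/(2σ²) − a²η²/(2b²) and v₂(t,x) := ½e^{2A₁(T−t)}(e^{r(T−t)}x + g₁(t))². Then for all (t,x) ∈ (0,T)×ℝ, ∂ₓₓv₂(t,x) = e^{(2A₁+2r)(T−t)} > 0 and ∂ₜv₂(t,x) + (rx + f)·∂ₓv₂(t,x) + A₁·(∂ₓv₂(t,x))²/∂ₓₓv₂(t,x) = 0, with terminal condition v₂(T,x) = ½x². -/

import Mathlib

open Real Set

/-- v₂(t,x) = ½e^{2A₁(T−t)}(e^{r(T−t)}x+g₁(t))² satisfies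
∂ₓₓv₂ = e^{(2A₁+2r)(T−t)} > 0 and the reduced HJB equation
∂ₜv₂ + (rx+f)∂ₓv₂ + A₁(∂ₓv₂)²/∂ₓₓv₂ = 0 on (0,T)×ℝ, with v₂(T,x) = ½x². -/
theorem stmt_6
    (T r μ σ a b η θ d γ : ℝ)
    (hT : 0 < T) (hr : 0 < r) (hσ : 0 < σ) (ha : 0 < a) (hb : 0 < b)
    (hη : 0 < η) (hμr : r < μ)
    (f : ℝ) (hf : f = a * θ - a * η + (d - γ) * r)
    (A₁ : ℝ) (hA₁ : A₁ = -(μ - r) ^ 2 / (2 * σ ^ 2) - a ^ 2 * η ^ 2 / (2 * b ^ 2))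
    (g₁ : ℝ → ℝ) (hg₁ : ∀ t, g₁ t = f * (exp (r * (T - t)) - 1) / r)
    (v₂ : ℝ → ℝ → ℝ)
    (hv₂ : ∀ t x, v₂ t x
      = (1 / 2) * exp (2 * A₁ * (T - t)) * (exp (r * (T - t)) * x + g₁ t) ^ 2) :
    (∀ t ∈ Ioo (0 : ℝ) T, ∀ x : ℝ,
      deriv (deriv (fun y => v₂ t y)) x = exp ((2 * A₁ + 2 * r) * (T - t)) ∧
      0 < exp ((2 * A₁ + 2 * r) * (T - t)) ∧
      deriv (fun s => v₂ s x) t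
        + (r * x + f) * deriv (fun y => v₂ t y) x
        + A₁ * (deriv (fun y => v₂ t y) x) ^ 2 / deriv (deriv (fun y => v₂ t y)) x = 0) ∧
    (∀ x : ℝ, v₂ T x = (1 / 2) * x ^ 2) := by
  have hrne : r ≠ 0 := hr.ne'
  constructor
  · intro t ht x
    have hlin : ∀ c : ℝ, HasDerivAt (fun s : ℝ => c * (T - s)) (-c) t := by
      intro c
      simpa using ((hasDerivAt_id t).const_sub T).const_mul c
    -- first x-derivative
    have hdx : ∀ y : ℝ, HasDerivAt (fun z => v₂ t z)
        (exp (2 * A₁ * (T - t)) * exp (r * (T - t)) * (exp (r * (T - t)) * y + g₁ t)) y := by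
      intro y
      have h1 : HasDerivAt (fun z : ℝ => exp (r * (T - t)) * z + g₁ t)
          (exp (r * (T - t))) y := by
        simpa using ((hasDerivAt_id y).const_mul (exp (r * (T - t)))).add_const (g₁ t)
      have h2 := (h1.fun_pow 2).const_mul (1 / 2 * exp (2 * A₁ * (T - t)))
      simp only [hv₂]
      refine h2.congr_deriv ?_
      norm_num
      ring
    have hdx' : deriv (fun z => v₂ t z)
        = fun y => exp (2 * A₁ * (T - t)) * exp (r * (T - t)) * (exp (r * (T - t)) * y + g₁ t) :=
      funext fun y => (hdx y).deriv
    have hdxx : deriv (fun y => exp (2 * A₁ * (T - t)) * exp (r * (T - t))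
          * (exp (r * (T - t)) * y + g₁ t)) x
        = exp (2 * A₁ * (T - t)) * exp (r * (T - t)) * exp (r * (T - t)) := by
      have h1 : HasDerivAt (fun y : ℝ => exp (r * (T - t)) * y + g₁ t)
          (exp (r * (T - t))) x := by
        simpa using ((hasDerivAt_id x).const_mul (exp (r * (T - t)))).add_const (g₁ t)
      exact (h1.const_mul (exp (2 * A₁ * (T - t)) * exp (r * (T - t)))).deriv
    have hexp : exp (2 * A₁ * (T - t)) * exp (r * (T - t)) * exp (r * (T - t))
        = exp ((2 * A₁ + 2 * r) * (T - t)) := by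
      rw [← exp_add, ← exp_add]; congr 1; ring
    -- t-derivative
    have hR' : HasDerivAt (fun s : ℝ => exp (r * (T - s))) (exp (r * (T - t)) * (-r)) t :=
      (hlin r).exp
    have hP : HasDerivAt
        (fun s : ℝ => exp (r * (T - s)) * x + f * (exp (r * (T - s)) - 1) / r)
        (exp (r * (T - t)) * (-r) * x + f * (exp (r * (T - t)) * (-r)) / r) t :=
      (hR'.mul_const x).add (((hR'.sub_const 1).const_mul f).div_const r)
    have hdt : HasDerivAt (fun s => v₂ s x)
        (1 / 2 * (exp (2 * A₁ * (T - t)) * -(2 * A₁))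
            * (exp (r * (T - t)) * x + f * (exp (r * (T - t)) - 1) / r) ^ 2
          + 1 / 2 * exp (2 * A₁ * (T - t))
            * (2 * (exp (r * (T - t)) * x + f * (exp (r * (T - t)) - 1) / r)
              * (exp (r * (T - t)) * (-r) * x + f * (exp (r * (T - t)) * (-r)) / r))) t := by
      have h := (((hlin (2 * A₁)).exp.const_mul (1 / 2)).fun_mul (hP.fun_pow 2))
      simp only [hv₂, hg₁]
      refine h.congr_deriv ?_
      norm_num
    refine ⟨?_, exp_pos _, ?_⟩
    · rw [hdx', hdxx, hexp]
    · rw [hdt.deriv, hdx']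
      simp only [hdxx]
      rw [hg₁]
      have h1 := exp_ne_zero (2 * A₁ * (T - t))
      have h2 := exp_ne_zero (r * (T - t))
      field_simp
      ring
  · intro x
    rw [hv₂, hg₁]
    simp
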